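/- Let R be a commutative Noetherian ring, let C be a chain complex 0 → C_m → ⋯ → C_0 → 0 of finitely generated free R-modules, and let 𝔭 ⊆ 𝔮 be prime ideals of R. Define b_i(C,𝔭) = dim over Frac(R/𝔭) of H_i(C ⊗_R Frac(R/𝔭)), and similarly for 𝔮, and set P_{C,𝔭}(λ) = Σ_i b_i(C,𝔭) λ^i. Then P_{C,𝔮}(λ) − P_{C,𝔭}(λ) = (1+λ)T(λ) for some polynomial T with non-negative integer coefficients. -/

import Mathlib

open Polynomial

/-- The `i`-th Betti number of a finitely generated free chain complex (encoded by
ranks `n i` and differential matrices `d i : C_{i+1} → C_i`) after extending scalars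
along a ring homomorphism `ρ : R →+* F` to a field `F`:
`dim H_i = dim ker(d out of C_i) − rank(d into C_i)`. -/
noncomputable def chainBetti {R F : Type*} [CommRing R] [Field F] (ρ : R →+* F)
    (n : ℕ → ℕ) (d : ∀ i, Matrix (Fin (n i)) (Fin (n (i + 1))) R) : ℕ → ℕ
  | 0 => n 0 - ((d 0).map ρ).rank
  | (i + 1) => n (i + 1) - ((d i).map ρ).rank - ((d (i + 1)).map ρ).rank

section RankLemmas

open Matrix

variable {F : Type*} [Field F]

/-- The rank of any (generalized) submatrix is at most the rank of the matrix. -/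
lemma rank_submatrix_le_aux {p q : Type*} [Fintype p] [Fintype q] {k l : ℕ}
    (A : Matrix p q F) (r : Fin k → p) (c : Fin l → q) :
    (A.submatrix r c).rank ≤ A.rank := by
  classical
  have h1 : A * (1 : Matrix q q F).submatrix (Equiv.refl q) c = A.submatrix id c := by
    rw [Matrix.mul_submatrix_one]; rfl
  have h2 : (1 : Matrix p p F).submatrix r (Equiv.refl p) * A.submatrix id c
      = A.submatrix r c := by
    rw [Matrix.one_submatrix_mul]; rfl
  calc (A.submatrix r c).rank
      = ((1 : Matrix p p F).submatrix r (Equiv.refl p) * A.submatrix id c).rank := by rw [h2]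
    _ ≤ (A.submatrix id c).rank := Matrix.rank_mul_le_right _ _
    _ = (A * (1 : Matrix q q F).submatrix (Equiv.refl q) c).rank := by rw [h1]
    _ ≤ A.rank := Matrix.rank_mul_le_left _ _

/-- If `k ≤ rank A`, one can find `k` linearly independent rows of `A`. -/
lemma exists_rows_linearIndependent {p q : Type*} [Fintype p] [Fintype q]
    (A : Matrix p q F) (k : ℕ) (hk : k ≤ A.rank) :
    ∃ r : Fin k → p, LinearIndependent F (fun i => A (r i)) := by
  classical
  obtain ⟨b, hbsub, hbspan, hbind⟩ := exists_linearIndependent F (Set.range A)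
  have hbfin : b.Finite := Set.finite_coe_iff.mp hbind.finite
  haveI := hbfin.fintype
  have hcard : A.rank = b.toFinset.card := by
    rw [A.rank_eq_finrank_span_row]
    show Module.finrank F (Submodule.span F (Set.range A)) = _
    rw [← hbspan, finrank_span_set_eq_card hbind]
  have hk' : k ≤ b.toFinset.card := hcard ▸ hk
  let e := b.toFinset.equivFin
  let ι : Fin k → {x // x ∈ b.toFinset} := fun i => e.symm (Fin.castLE hk' i)
  have hιinj : Function.Injective ι := by
    intro i j hij
    have h2 := e.symm.injective hij
    exact Fin.castLE_injective hk' h2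
  have hmem : ∀ i, ((ι i : q → F)) ∈ b := fun i => Set.mem_toFinset.mp (ι i).2
  have hA : ∀ i, ∃ p', A p' = (ι i : q → F) := fun i => hbsub (hmem i)
  choose r hr using hA
  refine ⟨r, ?_⟩
  have heq : (fun i => A (r i)) =
      (fun x : b => (x : q → F)) ∘ (fun i => (⟨(ι i : q → F), hmem i⟩ : b)) := by
    funext i
    simp [hr i]
  rw [heq]
  refine hbind.comp _ ?_
  intro i j hij
  have hij' : (⟨(ι i : q → F), hmem i⟩ : b) = ⟨(ι j : q → F), hmem j⟩ := hij
  have hv := congrArg Subtype.val hij'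
  exact hιinj (Subtype.ext hv)

/-- A square matrix with linearly independent rows has nonzero determinant. -/
lemma det_ne_zero_of_rows_linearIndependent {k : ℕ} {S : Matrix (Fin k) (Fin k) F}
    (h : LinearIndependent F (fun i => S i)) : S.det ≠ 0 := by
  intro h0
  obtain ⟨v, hv, hv0⟩ := (Matrix.exists_mulVec_eq_zero_iff (M := Sᵀ)).mpr
    (by rwa [Matrix.det_transpose])
  apply hv
  have hsum : ∑ i, v i • S i = 0 := by
    funext j
    have hj := congrFun hv0 j
    simp only [Matrix.mulVec, dotProduct, Matrix.transpose_apply] at hj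
    simpa [Finset.sum_apply, mul_comm] using hj
  funext i
  exact Fintype.linearIndependent_iff.mp h v hsum i

/-- If `k ≤ rank A` over a field, there is a `k × k` submatrix with nonzero determinant. -/
lemma exists_submatrix_det_ne_zero {p q : Type*} [Fintype p] [Fintype q]
    (A : Matrix p q F) (k : ℕ) (hk : k ≤ A.rank) :
    ∃ (r : Fin k → p) (c : Fin k → q), (A.submatrix r c).det ≠ 0 := by
  classical
  obtain ⟨r, hr⟩ := exists_rows_linearIndependent A k hk
  set B := A.submatrix r id with hB
  have hrB : LinearIndependent F (fun i => B i) := hr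
  have hBrank : B.rank = k := by
    have := hrB.rank_matrix
    simp at this
    exact this
  have hBt : k ≤ Bᵀ.rank := by
    rw [Matrix.rank_transpose, hBrank]
  obtain ⟨c, hc⟩ := exists_rows_linearIndependent Bᵀ k hBt
  refine ⟨r, c, ?_⟩
  have hS : A.submatrix r c = (Bᵀ.submatrix c id)ᵀ := by
    ext i j; rfl
  rw [hS, Matrix.det_transpose]
  exact det_ne_zero_of_rows_linearIndependent hc

/-- Key comparison: if every element killed by `φ` is killed by `ψ`, then for any matrix `M`
over `R`, the rank of `M` mapped along `ψ` is at most the rank mapped along `φ`. -/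
lemma rank_map_le_rank_map {R L : Type*} [CommRing R] [Field L]
    {p q : Type*} [Fintype p] [Fintype q]
    (M : Matrix p q R) (φ : R →+* F) (ψ : R →+* L)
    (h : ∀ x, φ x = 0 → ψ x = 0) :
    (M.map ψ).rank ≤ (M.map φ).rank := by
  classical
  obtain ⟨r, c, hdet⟩ := exists_submatrix_det_ne_zero (M.map ψ) _ le_rfl
  rw [Matrix.submatrix_map] at hdet
  have hdet' : ψ ((M.submatrix r c).det) ≠ 0 := by
    rw [RingHom.map_det, RingHom.mapMatrix_apply]
    exact hdet
  have hφ : φ ((M.submatrix r c).det) ≠ 0 := fun h0 => hdet' (h _ h0)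
  have hdetφ : ((M.submatrix r c).map φ).det ≠ 0 := by
    rw [← RingHom.mapMatrix_apply, ← RingHom.map_det]
    exact fun h0 => hφ h0
  have hunit : IsUnit ((M.submatrix r c).map φ) :=
    (Matrix.isUnit_iff_isUnit_det _).mpr (isUnit_iff_ne_zero.mpr hdetφ)
  have hrk := Matrix.rank_of_isUnit _ hunit
  calc (M.map ψ).rank = Fintype.card (Fin ((M.map ψ).rank)) := by simp
    _ = ((M.submatrix r c).map φ).rank := hrk.symm
    _ = ((M.map φ).submatrix r c).rank := by rw [Matrix.submatrix_map]
    _ ≤ (M.map φ).rank := rank_submatrix_le_aux _ _ _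

end RankLemmas

/-- for a finitely generated free chain complex `C` over a commutative
Noetherian ring `R` and prime ideals `𝔭 ⊆ 𝔮`, the Poincaré polynomial of `C` at `𝔮`
dominates the one at `𝔭`: their difference is `(1+λ)·T` with `T` having non-negative
integer coefficients. -/
theorem morse_inequalities_for_prime_ideals {R : Type*} [CommRing R] [IsNoetherianRing R]
    (m : ℕ) (n : ℕ → ℕ) (hn : ∀ i, m < i → n i = 0)
    (d : ∀ i, Matrix (Fin (n i)) (Fin (n (i + 1))) R)
    (hd : ∀ i, d i * d (i + 1) = 0)
    (𝔭 𝔮 : Ideal R) [𝔭.IsPrime] [𝔮.IsPrime] (hpq : 𝔭 ≤ 𝔮) :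
    ∃ T : Polynomial ℤ, (∀ i, 0 ≤ T.coeff i) ∧
      (∑ i ∈ Finset.range (m + 1),
          (C ((chainBetti ((algebraMap (R ⧸ 𝔮) (FractionRing (R ⧸ 𝔮))).comp
            (Ideal.Quotient.mk 𝔮)) n d i : ℤ)) * X ^ i))
      - (∑ i ∈ Finset.range (m + 1),
          (C ((chainBetti ((algebraMap (R ⧸ 𝔭) (FractionRing (R ⧸ 𝔭))).comp
            (Ideal.Quotient.mk 𝔭)) n d i : ℤ)) * X ^ i))
      = (1 + X) * T := by
  classical
  set φ : R →+* FractionRing (R ⧸ 𝔭) :=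
    (algebraMap (R ⧸ 𝔭) (FractionRing (R ⧸ 𝔭))).comp (Ideal.Quotient.mk 𝔭) with hφdef
  set ψ : R →+* FractionRing (R ⧸ 𝔮) :=
    (algebraMap (R ⧸ 𝔮) (FractionRing (R ⧸ 𝔮))).comp (Ideal.Quotient.mk 𝔮) with hψdef
  -- kernel comparison
  have hker : ∀ x, φ x = 0 → ψ x = 0 := by
    intro x hx
    have h1 : Ideal.Quotient.mk 𝔭 x = 0 := by
      apply IsFractionRing.injective (R ⧸ 𝔭) (FractionRing (R ⧸ 𝔭))
      simpa [hφdef] using hx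
    have hxq : x ∈ 𝔮 := hpq (Ideal.Quotient.eq_zero_iff_mem.mp h1)
    simp [hψdef, RingHom.comp_apply, Ideal.Quotient.eq_zero_iff_mem.mpr hxq]
  -- ranks
  have hle : ∀ i, ((d i).map ψ).rank ≤ ((d i).map φ).rank :=
    fun i => rank_map_le_rank_map (d i) φ ψ hker
  have h0p : ((d 0).map φ).rank ≤ n 0 := by
    simpa using Matrix.rank_le_card_height ((d 0).map φ)
  have h0q : ((d 0).map ψ).rank ≤ n 0 := by
    simpa using Matrix.rank_le_card_height ((d 0).map ψ)
  have haddp : ∀ i, ((d i).map φ).rank + ((d (i + 1)).map φ).rank ≤ n (i + 1) := by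
    intro i
    have hmul : ((d i).map φ) * ((d (i + 1)).map φ) = 0 := by
      rw [← Matrix.map_mul, hd i]
      ext a b; simp
    simpa using Matrix.rank_add_rank_le_card_of_mul_eq_zero hmul
  have haddq : ∀ i, ((d i).map ψ).rank + ((d (i + 1)).map ψ).rank ≤ n (i + 1) := by
    intro i
    have hmul : ((d i).map ψ) * ((d (i + 1)).map ψ) = 0 := by
      rw [← Matrix.map_mul, hd i]
      ext a b; simp
    simpa using Matrix.rank_add_rank_le_card_of_mul_eq_zero hmul
  have hnm : n (m + 1) = 0 := hn (m + 1) (Nat.lt_succ_self m)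
  have hpm : ((d m).map φ).rank = 0 := by
    have := Matrix.rank_le_card_width ((d m).map φ)
    simpa [hnm] using this
  have hqm : ((d m).map ψ).rank = 0 := by
    have := Matrix.rank_le_card_width ((d m).map ψ)
    simpa [hnm] using this
  -- the difference of ranks
  set e : ℕ → ℤ := fun i => (((d i).map φ).rank : ℤ) - ((d i).map ψ).rank with he_def
  have he : ∀ i, 0 ≤ e i := fun i => by
    simp only [he_def, sub_nonneg]
    exact_mod_cast hle i
  have hem : e m = 0 := by simp [he_def, hpm, hqm]
  -- Betti number identities over ℤ
  have hb0 : (chainBetti ψ n d 0 : ℤ) - (chainBetti φ n d 0 : ℤ) = e 0 := by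
    simp only [chainBetti, he_def]
    omega
  have hbs : ∀ i, (chainBetti ψ n d (i + 1) : ℤ) - (chainBetti φ n d (i + 1) : ℤ)
      = e i + e (i + 1) := by
    intro i
    have h1 := haddp i
    have h2 := haddq i
    simp only [chainBetti, he_def]
    omega
  -- construct T
  refine ⟨∑ i ∈ Finset.range (m + 1), C (e i) * X ^ i, ?_, ?_⟩
  · intro j
    rw [Polynomial.finset_sum_coeff]
    simp only [Polynomial.coeff_C_mul, Polynomial.coeff_X_pow, mul_ite, mul_one, mul_zero]
    rw [Finset.sum_ite_eq (Finset.range (m + 1)) j e]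
    split
    · exact he j
    · exact le_refl 0
  · have hLHS : (∑ i ∈ Finset.range (m + 1), C ((chainBetti ψ n d i : ℤ)) * X ^ i)
        - (∑ i ∈ Finset.range (m + 1), C ((chainBetti φ n d i : ℤ)) * X ^ i)
        = ∑ i ∈ Finset.range (m + 1),
            C ((chainBetti ψ n d i : ℤ) - (chainBetti φ n d i : ℤ)) * X ^ i := by
      rw [← Finset.sum_sub_distrib]
      refine Finset.sum_congr rfl fun i _ => ?_
      rw [map_sub, sub_mul]
    rw [hLHS]
    have h1 : ∑ i ∈ Finset.range (m + 1),
        C ((chainBetti ψ n d i : ℤ) - (chainBetti φ n d i : ℤ)) * X ^ i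
        = C (e 0) + ∑ i ∈ Finset.range m,
            (C (e i) * X ^ (i + 1) + C (e (i + 1)) * X ^ (i + 1)) := by
      rw [Finset.sum_range_succ']
      simp only [pow_zero, mul_one, hb0]
      rw [add_comm]
      congr 1
      refine Finset.sum_congr rfl fun i _ => ?_
      rw [hbs i, map_add, add_mul]
    have h2 : (1 + X : ℤ[X]) * (∑ i ∈ Finset.range (m + 1), C (e i) * X ^ i)
        = C (e 0) + ∑ i ∈ Finset.range m,
            (C (e i) * X ^ (i + 1) + C (e (i + 1)) * X ^ (i + 1)) := by
      rw [add_mul, one_mul, Finset.mul_sum]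
      have hXT : ∑ i ∈ Finset.range (m + 1), X * (C (e i) * X ^ i)
          = ∑ i ∈ Finset.range m, C (e i) * X ^ (i + 1) := by
        rw [Finset.sum_range_succ, hem]
        simp only [map_zero, zero_mul, mul_zero, add_zero]
        refine Finset.sum_congr rfl fun i _ => ?_
        ring
      rw [hXT, Finset.sum_range_succ' _ m]
      simp only [pow_zero, mul_one]
      rw [Finset.sum_add_distrib]
      ring
    rw [h1, h2]
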